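/- Let n ≥ 1, let B be a symmetric positive-definite n×n real matrix, and let h̄ : ℝⁿ → ℝ be a C¹ function with G := sup_y |∇h̄(y)| < ∞ such that for every x ∈ ℝⁿ the function y ↦ exp(−|x−y|²_B/2 − h̄(y)) is integrable. Define p(x) := ∫_{ℝⁿ} exp(−|x−y|²_B/2) exp(−h̄(y)) dy and q(x) := −log p(x). Then q is differentiable on ℝⁿ and for every x, |∇q(x)| ≤ G. (Gradient bound of Theorem 3.1 via the heat-kernel representation of the solution of the viscous Hamilton–Jacobi equation.) -/

import Mathlib

open MeasureTheory Real Matrix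
open scoped RealInnerProductSpace

noncomputable section

/-- Weighted squared norm `|x|_M² = ⟨M⁻¹ x, x⟩` for a matrix `M`. -/
def wsqNorm {n : ℕ} (M : Matrix (Fin n) (Fin n) ℝ) (x : EuclideanSpace ℝ (Fin n)) : ℝ :=
  ⟪(Matrix.toEuclideanLin M⁻¹) x, x⟫

set_option maxHeartbeats 2000000 in
/-- Gradient bound of Theorem 3.1 via the heat-kernel representation. -/
theorem stmt0 (n : ℕ) (hn : 1 ≤ n)
    (B : Matrix (Fin n) (Fin n) ℝ) (hB : B.PosDef)
    (hbar : EuclideanSpace ℝ (Fin n) → ℝ) (hreg : ContDiff ℝ 1 hbar)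
    (G : ℝ) (hG : ∀ y, ‖gradient hbar y‖ ≤ G)
    (hint : ∀ x, Integrable fun y =>
      Real.exp (-(wsqNorm B (x - y)) / 2) * Real.exp (-(hbar y)))
    (p q : EuclideanSpace ℝ (Fin n) → ℝ)
    (hp : ∀ x, p x = ∫ y, Real.exp (-(wsqNorm B (x - y)) / 2) * Real.exp (-(hbar y)))
    (hq : ∀ x, q x = -Real.log (p x)) :
    Differentiable ℝ q ∧ ∀ x, ‖gradient q x‖ ≤ G := by
  have hG0 : 0 ≤ G := le_trans (norm_nonneg _) (hG 0)
  have hd : Differentiable ℝ hbar := hreg.differentiable one_ne_zero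
  -- gradient and fderiv have equal norms
  have hgradnorm : ∀ (f : EuclideanSpace ℝ (Fin n) → ℝ) (x : EuclideanSpace ℝ (Fin n)), ‖gradient f x‖ = ‖fderiv ℝ f x‖ := by
    intro f x; rw [gradient]; exact LinearIsometryEquiv.norm_map _ _
  have hGd : ∀ y, ‖fderiv ℝ hbar y‖ ≤ G := fun y => (hgradnorm hbar y) ▸ hG y
  -- hbar is G-Lipschitz
  have hlip : LipschitzWith (⟨G, hG0⟩ : NNReal) hbar :=
    lipschitzWith_of_nnnorm_fderiv_le hd (fun y => by
      exact hGd y)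
  have hlip' : ∀ a b : EuclideanSpace ℝ (Fin n), hbar a - hbar b ≤ G * ‖a - b‖ := by
    intro a b
    have := hlip.dist_le_mul a b
    rw [Real.dist_eq] at this
    calc hbar a - hbar b ≤ |hbar a - hbar b| := le_abs_self _
      _ ≤ G * dist a b := this
      _ = G * ‖a - b‖ := by rw [dist_eq_norm]
  -- the kernel and the shifted integrand
  set F : EuclideanSpace ℝ (Fin n) → EuclideanSpace ℝ (Fin n) → ℝ := fun x z =>
    Real.exp (-(wsqNorm B z) / 2) * Real.exp (-(hbar (x - z))) with hF
  have hFpos : ∀ x z, 0 < F x z := fun x z => mul_pos (exp_pos _) (exp_pos _)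
  -- p x = ∫ z, F x z
  have hpF : ∀ x, p x = ∫ z, F x z := by
    intro x
    rw [hp x, ← integral_sub_left_eq_self (F x) volume x]
    congr 1; funext y
    simp only [hF, sub_sub_cancel]
  have hFint : ∀ x, Integrable (F x) := by
    intro x
    rw [← integrable_comp_sub_left (F x) x]
    have : (fun y => F x (x - y)) =
        fun y => Real.exp (-(wsqNorm B (x - y)) / 2) * Real.exp (-(hbar y)) := by
      funext y; simp only [hF, sub_sub_cancel]
    rw [this]; exact hint x
  -- continuity facts
  have hwcont : Continuous (wsqNorm B) :=
    ((Matrix.toEuclideanLin B⁻¹).continuous_of_finiteDimensional).inner continuous_id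
  have hFcont : ∀ x, Continuous (F x) := by
    intro x
    exact ((hwcont.neg.div_const 2).rexp).mul
      (((hreg.continuous.comp (continuous_const.sub continuous_id)).neg).rexp)
  -- positivity of p
  have hppos : ∀ x, 0 < p x := by
    intro x
    rw [hpF x]
    rw [integral_pos_iff_support_of_nonneg (fun z => (hFpos x z).le) (hFint x)]
    have : Function.support (F x) = Set.univ :=
      Set.eq_univ_of_forall fun z => Function.mem_support.mpr (hFpos x z).ne'
    rw [this]
    exact isOpen_univ.measure_pos volume ⟨0, trivial⟩
  -- the derivative of the integrand
  set F' : EuclideanSpace ℝ (Fin n) → EuclideanSpace ℝ (Fin n) → EuclideanSpace ℝ (Fin n) →L[ℝ] ℝ := fun x z => (F x z) • (-(fderiv ℝ hbar (x - z))) with hF'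
  have hFderiv : ∀ x z, HasFDerivAt (fun x => F x z) (F' x z) x := by
    intro x z
    have h1 : HasFDerivAt (fun x : EuclideanSpace ℝ (Fin n) => x - z) (ContinuousLinearMap.id ℝ (EuclideanSpace ℝ (Fin n))) x := by
      simpa using (hasFDerivAt_id x).sub_const z
    have h2 : HasFDerivAt (fun x : EuclideanSpace ℝ (Fin n) => hbar (x - z)) (fderiv ℝ hbar (x - z)) x := by
      have := ((hd (x - z)).hasFDerivAt).comp x h1
      exact this
    have h3 := ((h2.neg).exp).const_mul (Real.exp (-(wsqNorm B z) / 2))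
    refine h3.congr_fderiv ?_
    simp only [hF', hF, smul_smul, smul_neg, Pi.neg_apply]
  have hF'norm : ∀ x z, ‖F' x z‖ ≤ G * F x z := by
    intro x z
    have he : F' x z = F x z • -fderiv ℝ hbar (x - z) := rfl
    rw [he]
    refine le_trans (norm_smul_le (F x z) (-fderiv ℝ hbar (x - z))) ?_
    rw [norm_neg]
    have h1 : ‖F x z‖ = F x z := abs_of_pos (hFpos x z)
    rw [h1, mul_comm]
    exact mul_le_mul_of_nonneg_right (hGd _) (hFpos x z).le
  -- key differentiability statement
  have key : ∀ x₀ : EuclideanSpace ℝ (Fin n), HasFDerivAt q ((-(p x₀)⁻¹) • (∫ z, F' x₀ z)) x₀ ∧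
      ‖(-(p x₀)⁻¹ : ℝ) • (∫ z, F' x₀ z)‖ ≤ G := by
    intro x₀
    -- bound on the ball of radius 1
    have h_bound : ∀ᵐ z, ∀ x ∈ Metric.ball x₀ 1, ‖F' x z‖ ≤ (G * Real.exp G) * F x₀ z := by
      filter_upwards with z x hx
      refine le_trans (hF'norm x z) ?_
      have hFle : F x z ≤ Real.exp G * F x₀ z := by
        simp only [hF]
        rw [mul_comm (Real.exp G), mul_assoc]
        refine mul_le_mul_of_nonneg_left ?_ (exp_pos _).le
        rw [← Real.exp_add, exp_le_exp]
        have := hlip' (x₀ - z) (x - z)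
        have hxx : ‖(x₀ - z) - (x - z)‖ = ‖x₀ - x‖ := by congr 1; abel
        rw [hxx] at this
        have hb : ‖x₀ - x‖ ≤ 1 := by
          rw [← dist_eq_norm, dist_comm]; exact (Metric.mem_ball.mp hx).le
        nlinarith [hlip' (x₀ - z) (x - z), hxx]
      calc G * F x z ≤ G * (Real.exp G * F x₀ z) :=
            mul_le_mul_of_nonneg_left hFle hG0
        _ = (G * Real.exp G) * F x₀ z := by ring
    have hmeas : ∀ᶠ x in nhds x₀, AEStronglyMeasurable (F x) volume :=
      Filter.Eventually.of_forall fun x => (hFcont x).aestronglyMeasurable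
    have hF'meas : AEStronglyMeasurable (F' x₀) volume := by
      refine Continuous.aestronglyMeasurable ?_
      exact (hFcont x₀).smul
        (((hreg.continuous_fderiv one_ne_zero).comp (continuous_const.sub continuous_id)).neg)
    have hbddint : Integrable (fun z => (G * Real.exp G) * F x₀ z) :=
      (hFint x₀).const_mul _
    have hpderiv : HasFDerivAt (fun x => ∫ z, F x z) (∫ z, F' x₀ z) x₀ :=
      hasFDerivAt_integral_of_dominated_of_fderiv_le (Metric.ball_mem_nhds x₀ one_pos) hmeas (hFint x₀) hF'meas
        h_bound hbddint
        (Filter.Eventually.of_forall fun z x _ => hFderiv x z)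
    have hpderiv' : HasFDerivAt p (∫ z, F' x₀ z) x₀ := by
      have : p = fun x => ∫ z, F x z := funext hpF
      rw [this]; exact hpderiv
    have hqderiv : HasFDerivAt q ((-(p x₀)⁻¹) • (∫ z, F' x₀ z)) x₀ := by
      have hlog := (hpderiv'.log (hppos x₀).ne').neg
      have : q = fun x => -Real.log (p x) := funext hq
      rw [this]
      refine hlog.congr_fderiv ?_
      exact (neg_smul _ _).symm
    refine ⟨hqderiv, ?_⟩
    have hnormint : ‖∫ z, F' x₀ z‖ ≤ G * p x₀ := by
      have := norm_integral_le_of_norm_le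
        (μ := volume) ((hFint x₀).const_mul G)
        (Filter.Eventually.of_forall fun z => hF'norm x₀ z)
      rw [integral_const_mul, ← hpF x₀] at this
      exact this
    refine le_trans (norm_smul_le (-(p x₀)⁻¹ : ℝ) (∫ z, F' x₀ z)) ?_
    have h1 : ‖(-(p x₀)⁻¹ : ℝ)‖ = (p x₀)⁻¹ := by
      rw [norm_neg, Real.norm_eq_abs, abs_of_pos (inv_pos.mpr (hppos x₀))]
    rw [h1]
    calc (p x₀)⁻¹ * ‖∫ z, F' x₀ z‖ ≤ (p x₀)⁻¹ * (G * p x₀) :=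
          mul_le_mul_of_nonneg_left hnormint (inv_pos.mpr (hppos x₀)).le
      _ = G := by rw [mul_comm G (p x₀), ← mul_assoc, inv_mul_cancel₀ (hppos x₀).ne', one_mul]
  constructor
  · exact fun x => ((key x).1).differentiableAt
  · intro x
    rw [hgradnorm q x, (key x).1.fderiv]
    exact (key x).2
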